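/- arXiv:1311.1730 — 5 statements merged into one kernel-verified Lean document; each statement's English description precedes it below -/
import Mathlib

section
/- Let G be a finite group acting linearly on a finite-dimensional vector space V over a finite field, and let G act on the dual space V* by (g·λ)(v) = λ(g⁻¹·v) for g ∈ G, λ ∈ V*, v ∈ V. Then the number of orbits of G on V equals the number of orbits of G on V*. -/
open Module LinearMap

-- card of fixed vectors of f equals card of fixed functionals
lemma aux_card_fixed {F V : Type*} [Field F] [Fintype F] [AddCommGroup V] [Module F V]
    [FiniteDimensional F V] (f : V →ₗ[F] V) :
    Nat.card {v : V // f v = v} = Nat.card {l : Module.Dual F V // l ∘ₗ f = l} := by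
  have e1 : {v : V // f v = v} ≃ LinearMap.ker (f - LinearMap.id) := by
    refine Equiv.subtypeEquiv (Equiv.refl V) fun v => ?_
    simp [LinearMap.mem_ker, sub_eq_zero]
  have e2 : {l : Module.Dual F V // l ∘ₗ f = l} ≃
      LinearMap.ker ((f - LinearMap.id).dualMap) := by
    refine Equiv.subtypeEquiv (Equiv.refl _) fun l => ?_
    simp [LinearMap.mem_ker, LinearMap.ext_iff, sub_eq_zero, LinearMap.dualMap_apply',
      LinearMap.sub_apply, id_apply]
  rw [Nat.card_congr e1, Nat.card_congr e2]
  set g := f - LinearMap.id with hg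
  have h1 := LinearMap.finrank_range_add_finrank_ker g
  have h2 := LinearMap.finrank_range_add_finrank_ker g.dualMap
  have h3 := LinearMap.finrank_range_dualMap_eq_finrank_range g
  have h4 : finrank F (Module.Dual F V) = finrank F V := Subspace.dual_finrank_eq
  have hfr : finrank F (LinearMap.ker g.dualMap) = finrank F (LinearMap.ker g) := by omega
  have : Finite V := Module.finite_of_finite F
  have : Finite (Module.Dual F V) := Module.finite_of_finite F
  haveI : Fintype (LinearMap.ker g) := Fintype.ofFinite _
  haveI : Fintype (LinearMap.ker g.dualMap) := Fintype.ofFinite _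
  rw [Nat.card_eq_fintype_card, Nat.card_eq_fintype_card,
    card_eq_pow_finrank (K := F) (V := LinearMap.ker g), card_eq_pow_finrank (K := F) (V := LinearMap.ker g.dualMap), hfr]

lemma aux_burnside {G α β : Type*} [Group G] [Finite G] [Finite α] [Finite β]
    [MulAction G α] [MulAction G β]
    (h : ∀ g : G, Nat.card (MulAction.fixedBy α g) = Nat.card (MulAction.fixedBy β g)) :
    Nat.card (Quotient (MulAction.orbitRel G α)) =
      Nat.card (Quotient (MulAction.orbitRel G β)) := by
  classical
  cases nonempty_fintype G
  cases nonempty_fintype α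
  cases nonempty_fintype β
  haveI : ∀ g : G, Fintype (MulAction.fixedBy α g) := fun g => Fintype.ofFinite _
  haveI : ∀ g : G, Fintype (MulAction.fixedBy β g) := fun g => Fintype.ofFinite _
  haveI : Fintype (Quotient (MulAction.orbitRel G α)) := Fintype.ofFinite _
  haveI : Fintype (Quotient (MulAction.orbitRel G β)) := Fintype.ofFinite _
  have hb1 := MulAction.sum_card_fixedBy_eq_card_orbits_mul_card_group G α
  have hb2 := MulAction.sum_card_fixedBy_eq_card_orbits_mul_card_group G β
  have hsum : (∑ g : G, Fintype.card (MulAction.fixedBy α g)) =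
      ∑ g : G, Fintype.card (MulAction.fixedBy β g) := by
    refine Finset.sum_congr rfl fun g _ => ?_
    have := h g
    rwa [Nat.card_eq_fintype_card, Nat.card_eq_fintype_card] at this
  rw [Nat.card_eq_fintype_card, Nat.card_eq_fintype_card]
  have hGpos : 0 < Fintype.card G := Fintype.card_pos
  exact Nat.eq_of_mul_eq_mul_right hGpos (by rw [← hb1, ← hb2, hsum])


/-- Let `G` be a finite group acting linearly on a finite-dimensional
vector space `V` over a finite field, with the dual action `(g • λ)(v) = λ(g⁻¹ • v)` on
`V*`.  Then the number of orbits of `G` on `V` equals the number of orbits of `G` on `V*`. -/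
theorem orbit_count_eq_dual_orbit_count
    {F V G : Type*} [Field F] [Fintype F] [AddCommGroup V] [Module F V]
    [FiniteDimensional F V] [Group G] [Finite G]
    (ρ : Representation F G V) :
    Nat.card (Quot (fun v w : V => ∃ g : G, ρ g v = w)) =
      Nat.card (Quot (fun lam mu : Module.Dual F V =>
        ∃ g : G, lam ∘ₗ ρ g⁻¹ = mu)) := by
  have hinv : ∀ (g : G) (v : V), ρ g⁻¹ (ρ g v) = v := fun g v => by
    rw [← Module.End.mul_apply, ← map_mul, inv_mul_cancel, map_one, Module.End.one_apply]
  letI : MulAction G V :=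
    { smul := fun g v => ρ g v
      one_smul := fun v => by change ρ 1 v = v; simp
      mul_smul := fun g h v => by change ρ (g * h) v = ρ g (ρ h v); simp }
  letI : MulAction G (Module.Dual F V) :=
    { smul := fun g l => l ∘ₗ ρ g⁻¹
      one_smul := fun l => by
        change l ∘ₗ ρ 1⁻¹ = l
        ext v; simp
      mul_smul := fun g h l => by
        change l ∘ₗ ρ (g * h)⁻¹ = (l ∘ₗ ρ h⁻¹) ∘ₗ ρ g⁻¹
        ext v; simp [mul_inv_rev] }
  have e1 : Quot (fun v w : V => ∃ g : G, ρ g v = w) ≃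
      Quotient (MulAction.orbitRel G V) := by
    refine Quot.congrRight fun a b => ?_
    constructor
    · rintro ⟨g, rfl⟩; exact ⟨g⁻¹, hinv g a⟩
    · rintro ⟨g, rfl⟩; exact ⟨g⁻¹, hinv g b⟩
  have e2 : Quot (fun lam mu : Module.Dual F V => ∃ g : G, lam ∘ₗ ρ g⁻¹ = mu) ≃
      Quotient (MulAction.orbitRel G (Module.Dual F V)) := by
    refine Quot.congrRight fun a b => ?_
    constructor
    · rintro ⟨g, rfl⟩
      refine ⟨g⁻¹, ?_⟩
      show (a ∘ₗ ρ g⁻¹) ∘ₗ ρ g⁻¹⁻¹ = a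
      ext v; simp only [LinearMap.coe_comp, Function.comp_apply, inv_inv]; rw [hinv g v]
    · rintro ⟨g, rfl⟩
      refine ⟨g⁻¹, ?_⟩
      show (b ∘ₗ ρ g⁻¹) ∘ₗ ρ g⁻¹⁻¹ = b
      ext v; simp only [LinearMap.coe_comp, Function.comp_apply, inv_inv]; rw [hinv g v]
  have : Finite V := Module.finite_of_finite F
  have : Finite (Module.Dual F V) := Module.finite_of_finite F
  rw [Nat.card_congr e1, Nat.card_congr e2]
  refine aux_burnside ?_
  intro g
  have hV : Nat.card (MulAction.fixedBy V g) = Nat.card {v : V // ρ g v = v} := rfl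
  have hD : Nat.card (MulAction.fixedBy (Module.Dual F V) g) =
      Nat.card {l : Module.Dual F V // l ∘ₗ ρ g⁻¹ = l} := rfl
  rw [hV, hD, ← aux_card_fixed (ρ g⁻¹)]
  refine Nat.card_congr (Equiv.subtypeEquiv (Equiv.refl V) fun v => ?_)
  simp only [Equiv.refl_apply]
  constructor
  · intro h; conv_lhs => rw [← h]
    exact hinv g v
  · intro h; conv_lhs => rw [← h]
    rw [← Module.End.mul_apply, ← map_mul, mul_inv_cancel, map_one, Module.End.one_apply]
end

section
/- Let G be a finite group, V a finite-dimensional vector space over F_q, and f : G → V a bijection. Suppose G acts linearly on V in such a way that f(hgh⁻¹) = h·f(g) for all g, h ∈ G, with the dual action on V* given by (h·μ)(v) = μ(h⁻¹·v). Let H be a subgroup of G such that W = f(H) is a subspace of V, and let λ ∈ W* be such that the function h ↦ θ(λ(f(h))) on H is constant on each conjugacy class of H. Then for every g ∈ G, (1/|H|) · Σ_{h ∈ G with hgh⁻¹ ∈ H} θ(λ(f(hgh⁻¹))) = (1/|G|) · Σ_{h ∈ G} Σ_{μ ∈ V* with μ|_W = λ} θ((h·μ)(f(g))); that is, the induced class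 function Ind_H^G(θ∘λ∘f) equals (1/|G|) Σ_{h ∈ G} Σ_{μ|_W = λ} θ∘(h·μ)∘f. -/
/-- Let `G` be a finite group, `V` a finite-dimensional vector space over a
finite field `F` (= `F_q`), and `f : G → V` a bijection.  Suppose `G` acts linearly on `V` with
`f (h g h⁻¹) = h • f g`, the dual action on `V*` being `(h • μ)(v) = μ(h⁻¹ • v)`.  Let `H ≤ G`
with `W = f(H)` a subspace of `V`, and let `λ ∈ W*` (encoded as a functional on `V`, only its
values on `W` being relevant) be such that `h ↦ θ(λ(f h))` is a class function of `H`.  Then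
`Ind_H^G (θ ∘ λ ∘ f) (g) = (1/|G|) Σ_{h ∈ G} Σ_{μ|_W = λ} θ((h • μ)(f g))` for every `g ∈ G`. -/
theorem induced_character_formula
    {F V G : Type*} [Field F] [Fintype F] [AddCommGroup V] [Module F V]
    [FiniteDimensional F V] [Group G] [Fintype G]
    (θ : AddChar F ℂ) (hθ : ∃ a : F, θ a ≠ 1)
    (ρ : Representation F G V)
    (f : G ≃ V)
    (hf : ∀ g h : G, f (h * g * h⁻¹) = ρ h (f g))
    (H : Subgroup G) (W : Submodule F V)
    (hW : f '' (H : Set G) = (W : Set V))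
    (lam : Module.Dual F V)
    (hclass : ∀ g ∈ H, ∀ h ∈ H, θ (lam (f (h * g * h⁻¹))) = θ (lam (f g))) :
    ∀ g : G,
      (Nat.card H : ℂ)⁻¹ *
          ∑ᶠ h ∈ {h : G | h * g * h⁻¹ ∈ H}, θ (lam (f (h * g * h⁻¹))) =
        (Nat.card G : ℂ)⁻¹ *
          ∑ᶠ h : G, ∑ᶠ mu ∈ {mu : Module.Dual F V | ∀ w ∈ W, mu w = lam w},
            θ (mu (ρ h⁻¹ (f g))) := by
  classical
  intro g
  letI : Fintype V := Fintype.ofEquiv G f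
  letI : Fintype (Module.Dual F V) :=
    Fintype.ofInjective (fun φ : Module.Dual F V => (φ : V → F)) DFunLike.coe_injective
  letI : Fintype W.dualAnnihilator := Fintype.ofFinite _
  set A := W.dualAnnihilator with hA
  set C : ℂ := (Fintype.card A : ℂ) with hC
  -- membership transfer
  have hmem : ∀ x : G, f x ∈ W ↔ x ∈ H := by
    intro x
    constructor
    · intro hx
      have hx' : f x ∈ (W : Set V) := hx
      rw [← hW] at hx'
      obtain ⟨y, hy, hxy⟩ := hx'
      rwa [← f.injective hxy]
    · intro hx
      show f x ∈ (W : Set V)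
      rw [← hW]
      exact ⟨x, hx, rfl⟩
  -- inner sum computation
  have inner : ∀ v : V,
      (∑ᶠ mu ∈ {mu : Module.Dual F V | ∀ w ∈ W, mu w = lam w}, θ (mu v)) =
        if v ∈ W then C * θ (lam v) else 0 := by
    intro v
    have hset : {mu : Module.Dual F V | ∀ w ∈ W, mu w = lam w}
        = (fun ν : Module.Dual F V => lam + ν) '' (A : Set (Module.Dual F V)) := by
      ext mu
      simp only [Set.mem_setOf_eq, Set.mem_image, SetLike.mem_coe]
      constructor
      · intro hmu
        refine ⟨mu - lam, ?_, by abel⟩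
        rw [Submodule.mem_dualAnnihilator]
        intro w hw
        simp [hmu w hw]
      · rintro ⟨ν, hν, rfl⟩ w hw
        rw [Submodule.mem_dualAnnihilator] at hν
        simp [hν w hw]
    -- the character ν ↦ θ (ν v) on A
    set ψ : AddChar A ℂ :=
      θ.compAddMonoidHom (((LinearMap.applyₗ v).comp A.subtype).toAddMonoidHom) with hψ
    have hψ_apply : ∀ ν : A, ψ ν = θ ((ν : Module.Dual F V) v) := fun ν => rfl
    have key : (∑ ν : A, ψ ν) = if v ∈ W then C else 0 := by
      rw [AddChar.sum_eq_ite]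
      by_cases hv : v ∈ W
      · have hψ0 : ψ = 0 := by
          ext ν
          have h2 := (Submodule.mem_dualAnnihilator (ν : Module.Dual F V)).mp ν.2 v hv
          rw [hψ_apply, h2, AddChar.map_zero_eq_one, AddChar.zero_apply]
        simp [hψ0, hv, hC]
      · have hψ0 : ψ ≠ 0 := by
          obtain ⟨a, ha⟩ := hθ
          -- find ν₀ ∈ A with ν₀ v ≠ 0
          have hex : ∃ ν₀ : Module.Dual F V, ν₀ ∈ A ∧ ν₀ v ≠ 0 := by
            by_contra hcon
            push_neg at hcon
            exact hv ((Subspace.forall_mem_dualAnnihilator_apply_eq_zero_iff W v).mp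
              fun φ hφ => hcon φ hφ)
          obtain ⟨ν₀, hν₀A, hν₀⟩ := hex
          -- scale to hit a
          refine AddChar.ne_zero_iff.mpr ⟨(a * (ν₀ v)⁻¹) • ⟨ν₀, hν₀A⟩, ?_⟩
          have : (((a * (ν₀ v)⁻¹) • (⟨ν₀, hν₀A⟩ : A) : A) : Module.Dual F V) v = a := by
            simp [Submodule.coe_smul, mul_assoc, inv_mul_cancel₀ hν₀]
          rw [hψ_apply, this]
          exact ha
        simp [hψ0, hv]
    rw [hset, finsum_mem_image (fun x _ y _ h => by simpa using h)]
    have h1 : (∑ᶠ ν ∈ (A : Set (Module.Dual F V)), θ ((lam + ν) v))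
        = ∑ ν : A, θ (lam v) * ψ ν := by
      rw [← finsum_set_coe_eq_finsum_mem, finsum_eq_sum_of_fintype]
      refine Finset.sum_congr rfl fun ν _ => ?_
      rw [hψ_apply, LinearMap.add_apply, AddChar.map_add_eq_mul]
    rw [h1, ← Finset.mul_sum, key]
    by_cases hv : v ∈ W <;> simp [hv, mul_comm]
  -- cardinalities
  letI : Fintype W := Fintype.ofFinite _
  have hcardHW : Nat.card H = Fintype.card W := by
    have h1 : Nat.card (H : Set G) = Nat.card (f '' (H : Set G)) :=
      Nat.card_congr (Equiv.Set.image f _ f.injective)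
    rw [hW] at h1
    simpa [Nat.card_eq_fintype_card] using h1
  have hcardGV : Nat.card G = Fintype.card V := by
    rw [Nat.card_congr f, Nat.card_eq_fintype_card]
  have hcount : Fintype.card A * Fintype.card W = Fintype.card V := by
    rw [Module.card_eq_pow_finrank (K := F) (V := A), Module.card_eq_pow_finrank (K := F) (V := W),
      Module.card_eq_pow_finrank (K := F) (V := V), ← pow_add]
    congr 1
    rw [hA, ← (Subspace.quotEquivAnnihilator W).finrank_eq]
    exact Submodule.finrank_quotient_add_finrank W
  have hcardC : C * (Nat.card H : ℂ) = (Nat.card G : ℂ) := by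
    rw [hC, hcardHW, hcardGV]
    exact_mod_cast congrArg (Nat.cast : ℕ → ℂ) hcount
  -- rewrite both sides as finite sums
  set T : Finset G := Finset.univ.filter (fun h => h * g * h⁻¹ ∈ H) with hT
  have hLHS : (∑ᶠ h ∈ {h : G | h * g * h⁻¹ ∈ H}, θ (lam (f (h * g * h⁻¹))))
      = ∑ h ∈ T, θ (lam (f (h * g * h⁻¹))) := by
    rw [← finsum_mem_coe_finset]
    congr 1
    ext h
    simp [hT]
  have hRHS : ∀ h : G,
      (∑ᶠ mu ∈ {mu : Module.Dual F V | ∀ w ∈ W, mu w = lam w}, θ (mu (ρ h⁻¹ (f g))))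
        = if h⁻¹ * g * h ∈ H then C * θ (lam (f (h⁻¹ * g * h))) else 0 := by
    intro h
    rw [show ρ h⁻¹ (f g) = f (h⁻¹ * g * h) from by rw [← hf g h⁻¹, inv_inv], inner]
    simp only [hmem]
  rw [hLHS, finsum_eq_sum_of_fintype]
  have hswap : (∑ h : G, ∑ᶠ mu ∈ {mu : Module.Dual F V | ∀ w ∈ W, mu w = lam w},
        θ (mu (ρ h⁻¹ (f g))))
      = ∑ h : G, (if h * g * h⁻¹ ∈ H then C * θ (lam (f (h * g * h⁻¹))) else 0) := by
    refine Fintype.sum_equiv (Equiv.inv G) _ _ fun x => ?_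
    rw [hRHS x]
    simp
  rw [hswap, ← Finset.sum_filter, ← hT, ← Finset.mul_sum]
  have hH0 : (Nat.card H : ℂ) ≠ 0 := by
    exact_mod_cast (Nat.card_pos (α := H)).ne'
  have hG0 : (Nat.card G : ℂ) ≠ 0 := by
    exact_mod_cast (Nat.card_pos (α := G)).ne'
  have hC0 : C ≠ 0 := by
    rw [hC]
    exact_mod_cast Fintype.card_pos.ne'
  rw [← hcardC]
  field_simp
end

section
/- Let 𝔤 be a finite-dimensional nilpotent associative (non-unital) algebra over F_q and G = 1 + 𝔤 the associated algebra group. For λ ∈ 𝔤*, set 𝔩_λ = {x ∈ 𝔤 | λ(yx) = 0 for all y ∈ 𝔤}. Then the left orbit Gλ = {gλ | g ∈ G}, where (gλ)(x) = λ(g⁻¹x), equals {μ ∈ 𝔤* | μ(x) = λ(x) for all x ∈ 𝔩_λ}. -/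
/-- Let `𝔤 = A` be a finite-dimensional nilpotent associative (non-unital)
algebra over a finite field `F` (= `F_q`) and `G = 1 + 𝔤` the associated algebra group
(realized as the subgroup `Gsub` of units of the unitization consisting of the elements
`1 + x`, `x ∈ A`).  For `λ ∈ 𝔤*` set `𝔩_λ = {x ∈ 𝔤 | λ(yx) = 0 for all y ∈ 𝔤}`.  Then the
left orbit `Gλ = {gλ | g ∈ G}`, where `(gλ)(x) = λ(g⁻¹x)`, equals
`{μ ∈ 𝔤* | μ(x) = λ(x) for all x ∈ 𝔩_λ}`. -/
theorem left_orbit_eq_functionals_agreeing_on_left_ideal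
    {F A : Type*} [Field F] [Fintype F] [NonUnitalRing A] [Module F A]
    [SMulCommClass F A A] [IsScalarTower F A A] [FiniteDimensional F A]
    (hnil : ∃ N : ℕ, 0 < N ∧
      ∀ g : Fin N → A, (List.ofFn fun i => (g i : Unitization F A)).prod = 0)
    (Gsub : Subgroup (Unitization F A)ˣ)
    (hG : ∀ g : (Unitization F A)ˣ, g ∈ Gsub ↔ ∃ x : A, (g : Unitization F A) = 1 + x)
    (lam : Module.Dual F A) :
    {mu : Module.Dual F A | ∃ g : Gsub, ∀ z : A,
        mu z = lam ((((g⁻¹ : Gsub) : (Unitization F A)ˣ) * (z : Unitization F A)).snd)} =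
      {mu : Module.Dual F A | ∀ x : A, (∀ y : A, lam (y * x) = 0) → mu x = lam x} := by
  -- The bilinear form B x z = lam (x * z)
  set B : A →ₗ[F] Module.Dual F A := LinearMap.mk₂ F (fun x z => lam (x * z))
    (fun x y z => by simp [add_mul])
    (fun c x z => by simp [smul_mul_assoc])
    (fun x y z => by simp [mul_add])
    (fun c x z => by simp [mul_smul_comm]) with hB
  have hBapp : ∀ x z : A, B x z = lam (x * z) := fun x z => rfl
  -- every 1 + x is a unit
  have hunit : ∀ x : A, IsUnit ((1 : Unitization F A) + x) := by
    intro x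
    obtain ⟨N, hN, h⟩ := hnil
    refine IsNilpotent.isUnit_one_add ⟨N, ?_⟩
    have := h (fun _ => x)
    simpa [List.ofFn_const, List.prod_replicate] using this
  -- key linear algebra fact
  have hkey : LinearMap.range B = (LinearMap.ker B.flip).dualAnnihilator := by
    have hcomp : B = (B.flip).dualMap.comp (Module.Dual.eval F A) := by
      ext x z
      simp [LinearMap.dualMap_apply, Module.Dual.eval_apply]
    have htop : LinearMap.range (Module.Dual.eval F A) = ⊤ :=
      LinearMap.range_eq_top.mpr (Module.evalEquiv F A).surjective
    calc LinearMap.range B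
        = LinearMap.range ((B.flip).dualMap.comp (Module.Dual.eval F A)) :=
          congrArg LinearMap.range hcomp
      _ = LinearMap.range (B.flip).dualMap :=
          LinearMap.range_comp_of_range_eq_top _ htop
      _ = _ := LinearMap.range_dualMap_eq_dualAnnihilator_ker _
  ext mu
  simp only [Set.mem_setOf_eq]
  constructor
  · rintro ⟨g, hg⟩
    intro x hx
    have hinv : (g⁻¹ : Gsub).1 ∈ Gsub := (g⁻¹ : Gsub).2
    obtain ⟨x', hx'⟩ := (hG _).mp hinv
    have := hg x
    rw [hx'] at this
    rw [this]
    have : ((1 + (x' : Unitization F A)) * (x : Unitization F A)).snd = x + x' * x := by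
      simp [Unitization.snd_mul]
    rw [this, map_add, hx x', add_zero]
  · intro hmu
    have hmem : mu - lam ∈ (LinearMap.ker B.flip).dualAnnihilator := by
      rw [Submodule.mem_dualAnnihilator]
      intro w hw
      rw [LinearMap.mem_ker] at hw
      have hw' : ∀ y : A, lam (y * w) = 0 := by
        intro y
        have := congrFun (congrArg DFunLike.coe hw) y
        simpa [hBapp] using this
      simp [hmu w hw']
    rw [← hkey] at hmem
    obtain ⟨x, hxB⟩ := hmem
    -- g := (unit of 1+x)⁻¹
    obtain ⟨u, hu⟩ := hunit x
    have huG : u ∈ Gsub := (hG u).mpr ⟨x, hu⟩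
    refine ⟨⟨u⁻¹, Gsub.inv_mem huG⟩, fun z => ?_⟩
    have hgi : ((((⟨u⁻¹, Gsub.inv_mem huG⟩ : Gsub)⁻¹ : Gsub)) : (Unitization F A)ˣ) = u := by
      simp
    show mu z = lam (((((⟨u⁻¹, Gsub.inv_mem huG⟩ : Gsub)⁻¹ : Gsub) : (Unitization F A)ˣ) : Unitization F A) * (z : Unitization F A)).snd
    rw [hgi]
    rw [hu]
    have : ((1 + (x : Unitization F A)) * (z : Unitization F A)).snd = z + x * z := by
      simp [Unitization.snd_mul]
    rw [this, map_add]
    have := congrFun (congrArg DFunLike.coe hxB) z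
    simp only [hBapp, LinearMap.sub_apply] at this
    rw [this]
    ring
end

section
/- Let 𝔤 be a finite-dimensional nilpotent associative (non-unital) algebra over F_q, G = 1 + 𝔤 the associated algebra group, and λ ∈ 𝔤*. Set 𝔩_λ = {x ∈ 𝔤 | λ(yx) = 0 for all y ∈ 𝔤} and L_λ = 1 + 𝔩_λ. Then L_λ is a subgroup of G and the map L_λ → ℂ^× sending 1 + x to θ(λ(x)) is a group homomorphism (a linear character of L_λ). -/
private def pSeq {A : Type*} [NonUnitalRing A] (x : A) : ℕ → A
  | 0 => x
  | n+1 => x * pSeq x n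

private def iSeq {A : Type*} [NonUnitalRing A] (x : A) : ℕ → A
  | 0 => 0
  | n+1 => -x - x * iSeq x n

private theorem iSeq_comm {A : Type*} [NonUnitalRing A] (x : A) :
    ∀ n, x * iSeq x n = iSeq x n * x
  | 0 => by simp [iSeq]
  | n+1 => by
      simp only [iSeq, sub_mul, mul_sub, neg_mul, mul_neg, mul_assoc]
      rw [← iSeq_comm x n, ← mul_assoc]

private theorem iSeq_key {A : Type*} [NonUnitalRing A] (x : A) :
    ∀ n, x + iSeq x n + x * iSeq x n = ((-1 : ℤ)^n) • pSeq x n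
  | 0 => by simp [iSeq, pSeq]
  | n+1 => by
      have h := iSeq_key x n
      have : x + iSeq x (n+1) + x * iSeq x (n+1)
          = -(x * (x + iSeq x n + x * iSeq x n)) := by
        simp only [iSeq, mul_sub, mul_neg, mul_add]
        abel
      rw [this, h, pSeq, pow_succ]
      simp [mul_smul_comm]

private theorem listProd_const {F A : Type*} [Field F] [NonUnitalRing A] [Module F A]
    [SMulCommClass F A A] [IsScalarTower F A A] (x : A) :
    ∀ n, (List.ofFn fun _ : Fin (n+1) => (x : Unitization F A)).prod
      = Unitization.inr (pSeq x n)
  | 0 => by simp [pSeq]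
  | n+1 => by
      rw [List.ofFn_succ, List.prod_cons]
      simp only [listProd_const x n, pSeq, Unitization.inr_mul]

/-- Let `𝔤 = A` be a finite-dimensional nilpotent associative (non-unital)
algebra over a finite field `F` (= `F_q`), with algebra group `G = 1 + 𝔤` (whose group law,
read in the coordinate `x` of `1 + x`, is `x ⋆ y = x + y + xy`).  For `λ ∈ 𝔤*` set
`𝔩_λ = {x ∈ 𝔤 | λ(yx) = 0 for all y ∈ 𝔤}` and `L_λ = 1 + 𝔩_λ`.  Then `L_λ` is a subgroup of
`G` (it is closed under the group law and contains two-sided inverses) and the map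
`1 + x ↦ θ(λ(x))` is a group homomorphism `L_λ → ℂ^×` (a linear character of `L_λ`). -/
theorem one_add_left_ideal_subgroup_and_linear_character
    {F A : Type*} [Field F] [Fintype F] [NonUnitalRing A] [Module F A]
    [SMulCommClass F A A] [IsScalarTower F A A] [FiniteDimensional F A]
    (hnil : ∃ N : ℕ, 0 < N ∧
      ∀ g : Fin N → A, (List.ofFn fun i => (g i : Unitization F A)).prod = 0)
    (θ : AddChar F ℂ) (hθ : ∃ a : F, θ a ≠ 1)
    (lam : Module.Dual F A) :
    (∀ x ∈ {x : A | ∀ y : A, lam (y * x) = 0},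
      ∀ y ∈ {x : A | ∀ y : A, lam (y * x) = 0},
        x + y + x * y ∈ {x : A | ∀ y : A, lam (y * x) = 0}) ∧
    (∀ x ∈ {x : A | ∀ y : A, lam (y * x) = 0},
      ∃ y ∈ {x : A | ∀ y : A, lam (y * x) = 0},
        x + y + x * y = 0 ∧ y + x + y * x = 0) ∧
    (∀ x ∈ {x : A | ∀ y : A, lam (y * x) = 0},
      ∀ y ∈ {x : A | ∀ y : A, lam (y * x) = 0},
        θ (lam (x + y + x * y)) = θ (lam x) * θ (lam y)) := by
  refine ⟨?_, ?_, ?_⟩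
  · intro x hx y hy z
    have h1 : lam (z * x) = 0 := hx z
    have h2 : lam (z * y) = 0 := hy z
    have h3 : lam ((z * x) * y) = 0 := hy (z * x)
    simp only [mul_add, map_add, h1, h2, ← mul_assoc, h3, add_zero, zero_add]
  · intro x hx
    obtain ⟨N, hN, hprod⟩ := hnil
    obtain ⟨m, rfl⟩ : ∃ m, N = m + 1 := ⟨N - 1, (Nat.succ_pred_eq_of_pos hN).symm⟩
    have hpz : pSeq x m = 0 := by
      have h0 := (listProd_const (F := F) x m).symm.trans (hprod fun _ => x)
      rw [← Unitization.inr_zero F] at h0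
      exact Unitization.inr_injective h0
    refine ⟨iSeq x m, ?_, ?_, ?_⟩
    · -- membership by induction
      have : ∀ n, ∀ z : A, lam (z * iSeq x n) = 0 := by
        intro n
        induction n with
        | zero => intro z; simp [iSeq]
        | succ k ih =>
          intro z
          have h1 : lam (z * x) = 0 := hx z
          have h2 : lam ((z * x) * iSeq x k) = 0 := ih (z * x)
          simp only [iSeq, mul_sub, mul_neg, map_sub, map_neg, h1, ← mul_assoc, h2,
            neg_zero, zero_sub, neg_zero]
      exact this m
    · rw [iSeq_key x m, hpz, smul_zero]
    · have h := iSeq_key x m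
      rw [hpz, smul_zero] at h
      rw [← iSeq_comm x m]
      calc iSeq x m + x + x * iSeq x m = x + iSeq x m + x * iSeq x m := by abel
        _ = 0 := h
  · intro x hx y hy
    have h3 : lam (x * y) = 0 := hy x
    have h4 : lam (x + y + x * y) = lam x + lam y := by
      rw [map_add, map_add, h3, add_zero]
    rw [h4, AddChar.map_add_eq_mul]
end

section
/- Let q be a power of an odd prime and let G = 1 + 𝔤 be a pattern subgroup of UT_n(F_{q^k}), regarded over F_q, with † an involutive F_q-algebra antiautomorphism of 𝔤 satisfying (α e_ij)† ∈ F_{q^k}^× e_{j̄ ī} for all α ∈ F_{q^k}^×. Let U = {u ∈ G | u† = u⁻¹}, 𝔲 = {x ∈ 𝔤 | x† = −x}, and let f be a Springer morphism. Then for all u, v ∈ U: f(v) ∈ G·f(u) if and only if (v − 1) ∈ G(u − 1)G. Consequently, the superclasses K_u = {v ∈ U | f(v) ∈ G·f(u)} of U are exactly the nonempty sets of the form U ∩ K_g, where K_g = {h ∈ G | h − 1 ∈ G(g − 1)G} is a superclass of G in the algebra group supercharacter theory. -/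
open Matrix

section PatternGroups

variable (F : Type) [Field F] (E : Type) [Field E] [Algebra F E] {n : ℕ}

/-- The pattern subalgebra `𝔤 ⊆ 𝔲𝔱_n(E)` of matrices supported on the set `S` of strict
relations `i ≺ j` of a subposet of the usual linear order on `[n]`. -/
def patAlg (S : Set (Fin n × Fin n)) : Set (Matrix (Fin n) (Fin n) E) :=
  {x | ∀ i j : Fin n, (i, j) ∉ S → x i j = 0}

/-- The pattern subgroup `G = 1 + 𝔤`. -/
def patGrp (S : Set (Fin n × Fin n)) : Set (Matrix (Fin n) (Fin n) E) :=
  {g | ∃ x ∈ patAlg E S, g = 1 + x}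

/-- The two-sided ideal `𝔥 = {x ∈ 𝔤 | x_{ij} = 0 if j ≤ n/2}` (indices read 1-based). -/
def patHAlg (S : Set (Fin n × Fin n)) : Set (Matrix (Fin n) (Fin n) E) :=
  {x | x ∈ patAlg E S ∧ ∀ i j : Fin n, (j : ℕ) + 1 ≤ n / 2 → x i j = 0}

/-- The normal subgroup `H = 1 + 𝔥` of `G`. -/
def patHGrp (S : Set (Fin n × Fin n)) : Set (Matrix (Fin n) (Fin n) E) :=
  {g | ∃ x ∈ patHAlg E S, g = 1 + x}

/-- The extension of `†` from `𝔤` to `G = 1 + 𝔤`: `(1+x)† = 1 + x†`. -/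
def dagGrp (dag : Matrix (Fin n) (Fin n) E → Matrix (Fin n) (Fin n) E)
    (g : Matrix (Fin n) (Fin n) E) : Matrix (Fin n) (Fin n) E :=
  1 + dag (g - 1)

/-- The subgroup `U = {u ∈ G | u† = u⁻¹}` of the pattern group `G`. -/
def patUGrp (S : Set (Fin n × Fin n))
    (dag : Matrix (Fin n) (Fin n) E → Matrix (Fin n) (Fin n) E) :
    Set (Matrix (Fin n) (Fin n) E) :=
  {u | u ∈ patGrp E S ∧ u * dagGrp E dag u = 1 ∧ dagGrp E dag u * u = 1}

/-- The set `𝔲 = {x ∈ 𝔤 | x† = -x}`. -/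
def patUAlg (S : Set (Fin n × Fin n))
    (dag : Matrix (Fin n) (Fin n) E → Matrix (Fin n) (Fin n) E) :
    Set (Matrix (Fin n) (Fin n) E) :=
  {x | x ∈ patAlg E S ∧ dag x = -x}

/-- `†` is an involutive `F`-algebra antiautomorphism of the pattern algebra `𝔤` sending
each `α e_{ij}` (`α ∈ E^×`) into `E^× e_{\bar j \bar i}`, where `\bar i = n + 1 - i`. -/
structure IsPatternAntiInvolution (S : Set (Fin n × Fin n))
    (dag : Matrix (Fin n) (Fin n) E → Matrix (Fin n) (Fin n) E) : Prop where
  map_mem : ∀ x ∈ patAlg E S, dag x ∈ patAlg E S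
  map_add : ∀ x ∈ patAlg E S, ∀ y ∈ patAlg E S, dag (x + y) = dag x + dag y
  map_smul : ∀ (c : F), ∀ x ∈ patAlg E S,
    dag (algebraMap F E c • x) = algebraMap F E c • dag x
  map_mul : ∀ x ∈ patAlg E S, ∀ y ∈ patAlg E S, dag (x * y) = dag y * dag x
  invol : ∀ x ∈ patAlg E S, dag (dag x) = x
  elementary : ∀ i j : Fin n, (i, j) ∈ S → ∀ α : E, α ≠ 0 →
    ∃ β : E, β ≠ 0 ∧ dag (Matrix.single i j α) = Matrix.single j.rev i.rev β

/-- A Springer morphism: a bijection `f : G → 𝔤` with `f(U) = 𝔲` and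
`f(1+x) = x + Σ_{i ≥ 2} a_i x^i` with coefficients `a_i ∈ F`. -/
def IsSpringerMorphism (S : Set (Fin n × Fin n))
    (dag f : Matrix (Fin n) (Fin n) E → Matrix (Fin n) (Fin n) E) : Prop :=
  Set.BijOn f (patGrp E S) (patAlg E S) ∧
  f '' patUGrp E S dag = patUAlg E S dag ∧
  ∃ (N : ℕ) (a : ℕ → F), a 1 = 1 ∧
    ∀ x ∈ patAlg E S, f (1 + x) = ∑ i ∈ Finset.Ico 1 N, algebraMap F E (a i) • x ^ i

/-- The orbit `G · w = {g w g† | g ∈ G}` of `w` under the action `g · x = g x g†`. -/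
def patGrpDot (S : Set (Fin n × Fin n))
    (dag : Matrix (Fin n) (Fin n) E → Matrix (Fin n) (Fin n) E)
    (w : Matrix (Fin n) (Fin n) E) : Set (Matrix (Fin n) (Fin n) E) :=
  {z | ∃ g ∈ patGrp E S, z = g * w * dagGrp E dag g}

end PatternGroups

section Supercharacters

variable (F : Type) [Field F] (E : Type) [Field E] [Algebra F E] {n : ℕ}

/-- The orbit of `λ ∈ 𝔲*` under a subset `T ⊆ G` (for `T = G` or `T = H`), acting by
`(g·λ)(x) = λ(g⁻¹ · x) = λ(g⁻¹ x (g⁻¹)†)`.  An element `λ ∈ 𝔲*` is recorded as a function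
`𝔲 → F` (here represented via a functional `lam` on the full matrix space: only its values
on `𝔲` matter). -/
def patDualOrbit (S : Set (Fin n × Fin n))
    (dag : Matrix (Fin n) (Fin n) E → Matrix (Fin n) (Fin n) E)
    (T : Set (Matrix (Fin n) (Fin n) E))
    (lam : Module.Dual F (Matrix (Fin n) (Fin n) E)) :
    Set (↥(patUAlg E S dag) → F) :=
  {ψ | ∃ g ∈ T, ∀ x : ↥(patUAlg E S dag),
    ψ x = lam (g⁻¹ * (x : Matrix (Fin n) (Fin n) E) * dagGrp E dag g⁻¹)}

/-- The supercharacter `χ_λ = (|H·λ|/|G·λ|) Σ_{μ ∈ G·λ} θ ∘ μ ∘ f` of `U`, for `λ ∈ 𝔲*`. -/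
noncomputable def patSupchar (S : Set (Fin n × Fin n))
    (dag f : Matrix (Fin n) (Fin n) E → Matrix (Fin n) (Fin n) E)
    (θ : AddChar F ℂ) (lam : Module.Dual F (Matrix (Fin n) (Fin n) E))
    (u : Matrix (Fin n) (Fin n) E) : ℂ :=
  (Nat.card (patDualOrbit F E S dag (patHGrp E S) lam) : ℂ) /
    (Nat.card (patDualOrbit F E S dag (patGrp E S) lam) : ℂ) *
    ∑ᶠ ψ ∈ patDualOrbit F E S dag (patGrp E S) lam,
      @dite ℂ (f u ∈ patUAlg E S dag) (Classical.propDecidable _)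
        (fun h => θ (ψ ⟨f u, h⟩)) (fun _ => 0)

/-- The superclass `K_u = {v ∈ U | f(v) ∈ G · f(u)}` of `u`, as a subset of the ambient
matrix space. -/
def patSupclass (S : Set (Fin n × Fin n))
    (dag f : Matrix (Fin n) (Fin n) E → Matrix (Fin n) (Fin n) E)
    (u : Matrix (Fin n) (Fin n) E) : Set (Matrix (Fin n) (Fin n) E) :=
  {v | v ∈ patUGrp E S dag ∧ f v ∈ patGrpDot E S dag (f u)}

end Supercharacters

section Helpers
variable {E : Type} [Field E] {n : ℕ} {S : Set (Fin n × Fin n)}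

lemma pa_zero : (0 : Matrix (Fin n) (Fin n) E) ∈ patAlg E S := by
  intro i j _; rfl

lemma pa_add {x y : Matrix (Fin n) (Fin n) E} (hx : x ∈ patAlg E S) (hy : y ∈ patAlg E S) :
    x + y ∈ patAlg E S := by
  intro i j h; simp [Matrix.add_apply, hx i j h, hy i j h]

lemma pa_neg {x : Matrix (Fin n) (Fin n) E} (hx : x ∈ patAlg E S) :
    -x ∈ patAlg E S := by
  intro i j h; simp [Matrix.neg_apply, hx i j h]

lemma pa_smul {x : Matrix (Fin n) (Fin n) E} (c : E) (hx : x ∈ patAlg E S) :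
    c • x ∈ patAlg E S := by
  intro i j h; simp [Matrix.smul_apply, hx i j h]

lemma pa_mul (hS2 : ∀ i j k : Fin n, (i, j) ∈ S → (j, k) ∈ S → (i, k) ∈ S)
    {x y : Matrix (Fin n) (Fin n) E} (hx : x ∈ patAlg E S) (hy : y ∈ patAlg E S) :
    x * y ∈ patAlg E S := by
  intro i j h
  rw [Matrix.mul_apply]
  apply Finset.sum_eq_zero
  intro k _
  by_cases h1 : (i, k) ∈ S
  · by_cases h2 : (k, j) ∈ S
    · exact absurd (hS2 i k j h1 h2) h
    · simp [hy k j h2]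
  · simp [hx i k h1]

lemma pa_pow (hS2 : ∀ i j k : Fin n, (i, j) ∈ S → (j, k) ∈ S → (i, k) ∈ S)
    {x : Matrix (Fin n) (Fin n) E} (hx : x ∈ patAlg E S) {m : ℕ} (hm : 1 ≤ m) :
    x ^ m ∈ patAlg E S := by
  induction m with
  | zero => omega
  | succ m ih =>
    rcases Nat.eq_or_lt_of_le hm with h | h
    · simpa [← h] using hx
    · rw [pow_succ]
      exact pa_mul hS2 (ih (by omega)) hx

lemma pa_sum {ι : Type*} (s : Finset ι) (g : ι → Matrix (Fin n) (Fin n) E)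
    (hg : ∀ i ∈ s, g i ∈ patAlg E S) : (∑ i ∈ s, g i) ∈ patAlg E S := by
  classical
  induction s using Finset.induction_on with
  | empty => simpa using pa_zero
  | @insert a s hnotmem ih =>
    rw [Finset.sum_insert hnotmem]
    exact pa_add (hg _ (Finset.mem_insert_self _ _))
      (ih fun i hi => hg i (Finset.mem_insert_of_mem hi))

lemma pa_pow_entry (hS1 : ∀ p ∈ S, p.1 < p.2)
    {x : Matrix (Fin n) (Fin n) E} (hx : x ∈ patAlg E S) :
    ∀ (m : ℕ) (i j : Fin n), (j : ℕ) < (i : ℕ) + m → (x ^ m) i j = 0 := by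
  intro m
  induction m with
  | zero =>
    intro i j h
    have : ¬ (i = j) := by intro e; subst e; omega
    simp [Matrix.one_apply, this]
  | succ m ih =>
    intro i j h
    rw [pow_succ, Matrix.mul_apply]
    apply Finset.sum_eq_zero
    intro k _
    by_cases h1 : (j : ℕ) < (k : ℕ) + 1
    · have h3 : (k, j) ∉ S := by
        intro hmem
        have := hS1 _ hmem
        simp only at this
        omega
      simp [hx k j h3]
    · simp [ih i k (by omega)]

lemma pa_nilpotent (hS1 : ∀ p ∈ S, p.1 < p.2)
    {x : Matrix (Fin n) (Fin n) E} (hx : x ∈ patAlg E S) :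
    x ^ n = 0 := by
  ext i j
  exact pa_pow_entry hS1 hx n i j (by omega)

end Helpers
section Helpers2
variable {E : Type} [Field E] {n : ℕ} {S : Set (Fin n × Fin n)}

lemma pg_one : (1 : Matrix (Fin n) (Fin n) E) ∈ patGrp E S :=
  ⟨0, pa_zero, by simp⟩

lemma pg_mul (hS2 : ∀ i j k : Fin n, (i, j) ∈ S → (j, k) ∈ S → (i, k) ∈ S)
    {g h : Matrix (Fin n) (Fin n) E}
    (hg : g ∈ patGrp E S) (hh : h ∈ patGrp E S) : g * h ∈ patGrp E S := by
  obtain ⟨x, hx, rfl⟩ := hg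
  obtain ⟨y, hy, rfl⟩ := hh
  exact ⟨x + y + x * y, pa_add (pa_add hx hy) (pa_mul hS2 hx hy), by noncomm_ring⟩

lemma pg_inv (hS1 : ∀ p ∈ S, (p:(Fin n × Fin n)).1 < p.2)
    (hS2 : ∀ i j k : Fin n, (i, j) ∈ S → (j, k) ∈ S → (i, k) ∈ S)
    {g : Matrix (Fin n) (Fin n) E} (hg : g ∈ patGrp E S) :
    ∃ g' ∈ patGrp E S, g * g' = 1 ∧ g' * g = 1 := by
  obtain ⟨x, hx, rfl⟩ := hg
  set y : Matrix (Fin n) (Fin n) E := ∑ j ∈ Finset.Ico 1 (n+1), (-x) ^ j with hy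
  have hymem : y ∈ patAlg E S :=
    pa_sum _ _ fun j hj => by
      exact pa_pow hS2 (pa_neg hx) (Finset.mem_Ico.mp hj).1
  have hgeom : (∑ j ∈ Finset.range (n+1), (-x) ^ j) = 1 + y := by
    rw [hy, Finset.range_eq_Ico, Finset.sum_eq_sum_Ico_succ_bot (by omega)]
    simp
  have hmul : (1 + y) * (1 + x) = 1 := by
    have h0 := geom_sum_mul (-x) (n+1)
    have hnil : (-x) ^ (n+1) = 0 := by
      rw [pow_succ, neg_pow, pa_nilpotent hS1 hx]
      simp
    rw [hnil, hgeom, zero_sub] at h0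
    calc (1 + y) * (1 + x) = -((1 + y) * (-x - 1)) := by noncomm_ring
    _ = -(-1) := by rw [h0]
    _ = 1 := neg_neg 1
  exact ⟨1 + y, ⟨y, hymem, rfl⟩, mul_eq_one_comm.mpr hmul, hmul⟩

end Helpers2
section Helpers3
variable {F : Type} [Field F] {E : Type} [Field E] [Algebra F E] {n : ℕ}
  {S : Set (Fin n × Fin n)}
  {dag : Matrix (Fin n) (Fin n) E → Matrix (Fin n) (Fin n) E}

lemma dg_zero (hdag : IsPatternAntiInvolution F E S dag) : dag 0 = 0 := by
  have := hdag.map_add 0 pa_zero 0 pa_zero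
  simp only [add_zero] at this
  exact (left_eq_add.mp this)

lemma dg_grp_eq {x : Matrix (Fin n) (Fin n) E} :
    dagGrp E dag (1 + x) = 1 + dag x := by
  simp [dagGrp]

lemma dg_grp_mem (hdag : IsPatternAntiInvolution F E S dag)
    {g : Matrix (Fin n) (Fin n) E} (hg : g ∈ patGrp E S) :
    dagGrp E dag g ∈ patGrp E S := by
  obtain ⟨x, hx, rfl⟩ := hg
  exact ⟨dag x, hdag.map_mem x hx, by rw [dg_grp_eq]⟩

lemma dg_grp_one (hdag : IsPatternAntiInvolution F E S dag) :
    dagGrp E dag (1 : Matrix (Fin n) (Fin n) E) = 1 := by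
  simp [dagGrp, dg_zero hdag]

lemma dg_grp_mul (hS2 : ∀ i j k : Fin n, (i, j) ∈ S → (j, k) ∈ S → (i, k) ∈ S)
    (hdag : IsPatternAntiInvolution F E S dag)
    {g h : Matrix (Fin n) (Fin n) E} (hg : g ∈ patGrp E S) (hh : h ∈ patGrp E S) :
    dagGrp E dag (g * h) = dagGrp E dag h * dagGrp E dag g := by
  obtain ⟨x, hx, rfl⟩ := hg
  obtain ⟨y, hy, rfl⟩ := hh
  have h1 : (1 + x) * (1 + y) = 1 + (x + y + x * y) := by noncomm_ring
  rw [h1, dg_grp_eq, dg_grp_eq, dg_grp_eq,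
    hdag.map_add _ (pa_add hx hy) _ (pa_mul hS2 hx hy),
    hdag.map_add _ hx _ hy, hdag.map_mul _ hx _ hy]
  noncomm_ring

lemma dg_mul_left (hS2 : ∀ i j k : Fin n, (i, j) ∈ S → (j, k) ∈ S → (i, k) ∈ S)
    (hdag : IsPatternAntiInvolution F E S dag)
    {g x : Matrix (Fin n) (Fin n) E} (hg : g ∈ patGrp E S) (hx : x ∈ patAlg E S) :
    dag (g * x) = dag x * dagGrp E dag g := by
  obtain ⟨s, hs, rfl⟩ := hg
  have h1 : (1 + s) * x = x + s * x := by noncomm_ring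
  rw [h1, hdag.map_add _ hx _ (pa_mul hS2 hs hx), hdag.map_mul _ hs _ hx, dg_grp_eq]
  noncomm_ring

lemma dg_mul_right (hS2 : ∀ i j k : Fin n, (i, j) ∈ S → (j, k) ∈ S → (i, k) ∈ S)
    (hdag : IsPatternAntiInvolution F E S dag)
    {g x : Matrix (Fin n) (Fin n) E} (hg : g ∈ patGrp E S) (hx : x ∈ patAlg E S) :
    dag (x * g) = dagGrp E dag g * dag x := by
  obtain ⟨s, hs, rfl⟩ := hg
  have h1 : x * (1 + s) = x + x * s := by noncomm_ring
  rw [h1, hdag.map_add _ hx _ (pa_mul hS2 hx hs), hdag.map_mul _ hx _ hs, dg_grp_eq]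
  noncomm_ring

lemma dg_grp_invol (hdag : IsPatternAntiInvolution F E S dag)
    {g : Matrix (Fin n) (Fin n) E} (hg : g ∈ patGrp E S) :
    dagGrp E dag (dagGrp E dag g) = g := by
  obtain ⟨x, hx, rfl⟩ := hg
  rw [dg_grp_eq, dg_grp_eq, hdag.invol _ hx]

lemma pg_pow (hS2 : ∀ i j k : Fin n, (i, j) ∈ S → (j, k) ∈ S → (i, k) ∈ S)
    {g : Matrix (Fin n) (Fin n) E} (hg : g ∈ patGrp E S) (r : ℕ) :
    g ^ r ∈ patGrp E S := by
  induction r with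
  | zero => simpa using pg_one
  | succ r ih => rw [pow_succ]; exact pg_mul hS2 ih hg

lemma dg_grp_pow (hS2 : ∀ i j k : Fin n, (i, j) ∈ S → (j, k) ∈ S → (i, k) ∈ S)
    (hdag : IsPatternAntiInvolution F E S dag)
    {g : Matrix (Fin n) (Fin n) E} (hg : g ∈ patGrp E S) (r : ℕ) :
    dagGrp E dag (g ^ r) = (dagGrp E dag g) ^ r := by
  induction r with
  | zero => simpa using dg_grp_one hdag
  | succ r ih =>
    rw [pow_succ, dg_grp_mul hS2 hdag (pg_pow hS2 hg r) hg, ih, pow_succ]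
    exact (Commute.pow_self (dagGrp E dag g) r).symm.eq

end Helpers3
section Helpers4
variable {F : Type} [Field F] {E : Type} [Field E] [Algebra F E] {n : ℕ}
  {S : Set (Fin n × Fin n)}
  {dag : Matrix (Fin n) (Fin n) E → Matrix (Fin n) (Fin n) E}

lemma pg_mul_pa (hS2 : ∀ i j k : Fin n, (i, j) ∈ S → (j, k) ∈ S → (i, k) ∈ S)
    {g x : Matrix (Fin n) (Fin n) E} (hg : g ∈ patGrp E S) (hx : x ∈ patAlg E S) :
    g * x ∈ patAlg E S := by
  obtain ⟨s, hs, rfl⟩ := hg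
  have h1 : (1 + s) * x = x + s * x := by noncomm_ring
  rw [h1]
  exact pa_add hx (pa_mul hS2 hs hx)

lemma pa_mul_pg (hS2 : ∀ i j k : Fin n, (i, j) ∈ S → (j, k) ∈ S → (i, k) ∈ S)
    {g x : Matrix (Fin n) (Fin n) E} (hg : g ∈ patGrp E S) (hx : x ∈ patAlg E S) :
    x * g ∈ patAlg E S := by
  obtain ⟨s, hs, rfl⟩ := hg
  have h1 : x * (1 + s) = x + x * s := by noncomm_ring
  rw [h1]
  exact pa_add hx (pa_mul hS2 hx hs)

lemma springer_factor (hS2 : ∀ i j k : Fin n, (i, j) ∈ S → (j, k) ∈ S → (i, k) ∈ S)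
    {f : Matrix (Fin n) (Fin n) E → Matrix (Fin n) (Fin n) E}
    (hf : IsSpringerMorphism F E S dag f) :
    ∀ x ∈ patAlg E S, ∃ c ∈ patGrp E S, f (1 + x) = x * c := by
  obtain ⟨hbij, -, N, a, ha1, hsum⟩ := hf
  by_cases hN : 2 ≤ N
  · intro x hx
    refine ⟨1 + ∑ i ∈ Finset.Ico 2 N, algebraMap F E (a i) • x ^ (i - 1),
      ⟨_, pa_sum _ _ (fun i hi => pa_smul _
        (pa_pow hS2 hx (by have := (Finset.mem_Ico.mp hi).1; omega))), rfl⟩, ?_⟩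
    rw [hsum x hx, Finset.sum_eq_sum_Ico_succ_bot (show 1 < N by omega), ha1,
      _root_.map_one, one_smul, pow_one, mul_add, mul_one, Finset.mul_sum]
    congr 1
    refine Finset.sum_congr rfl fun i hi => ?_
    have hi2 := (Finset.mem_Ico.mp hi).1
    rw [mul_smul_comm]
    congr 1
    rw [← pow_succ']
    congr 1
    omega
  · intro x hx
    have hzero : ∀ y ∈ patAlg E S, f (1 + y) = 0 := by
      intro y hy
      rw [hsum y hy, Finset.Ico_eq_empty (by omega), Finset.sum_empty]
    have hx0 : x = 0 := by
      have := hbij.2.1 (⟨x, hx, rfl⟩ : (1:Matrix (Fin n) (Fin n) E) + x ∈ patGrp E S)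
        (⟨0, pa_zero, by simp⟩ : (1:Matrix (Fin n) (Fin n) E) + 0 ∈ patGrp E S)
        (by rw [hzero x hx, hzero 0 pa_zero])
      simpa using this
    subst hx0
    exact ⟨1, pg_one, by rw [hzero 0 pa_zero, zero_mul]⟩

lemma pg_sqrt [Fintype F] (hodd : ringChar F ≠ 2)
    (hS1 : ∀ p ∈ S, (p:(Fin n × Fin n)).1 < p.2)
    {m : Matrix (Fin n) (Fin n) E} (hm : m ∈ patGrp E S) :
    ∃ r : ℕ, (m ^ r) ^ 2 = m := by
  obtain ⟨t, ht, rfl⟩ := hm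
  set p := ringChar F with hpdef
  have hp : p.Prime := (CharP.char_is_prime_or_zero F p).resolve_right
    (CharP.char_ne_zero_of_finite F p)
  haveI : Fact p.Prime := ⟨hp⟩
  haveI : CharP E p := charP_of_injective_ringHom (algebraMap F E).injective p
  have key : ((1:Matrix (Fin n) (Fin n) E) + t) ^ (p ^ n) = 1 := by
    have hpoly : ((1 + Polynomial.X : Polynomial E)) ^ (p ^ n)
        = 1 + Polynomial.X ^ (p ^ n) := by
      rw [add_pow_char_pow, one_pow]
    have h2 := congrArg (Polynomial.aeval t :
      Polynomial E →ₐ[E] Matrix (Fin n) (Fin n) E) hpoly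
    simp only [map_pow, map_add, _root_.map_one, Polynomial.aeval_X] at h2
    rw [h2]
    have hnil : t ^ (p ^ n) = 0 := by
      have hn : n ≤ p ^ n := le_of_lt (Nat.lt_pow_self (n := n) hp.one_lt)
      calc t ^ (p ^ n) = t ^ n * t ^ (p ^ n - n) := by rw [← pow_add]; congr 1; omega
      _ = 0 := by rw [pa_nilpotent hS1 ht, zero_mul]
    rw [hnil, add_zero]
  obtain ⟨r, hr⟩ : Odd (p ^ n) := (hp.odd_of_ne_two hodd).pow
  refine ⟨r + 1, ?_⟩
  rw [← pow_mul, show (r + 1) * 2 = p ^ n + 1 by omega, pow_succ, key, one_mul]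

lemma conj_iter {x m md : Matrix (Fin n) (Fin n) E} (h : m * x = x * md) :
    ∀ r : ℕ, m ^ r * x = x * md ^ r := by
  intro r
  induction r with
  | zero => simp
  | succ r ih =>
    rw [pow_succ, pow_succ, mul_assoc, ← mul_assoc x, ← ih, mul_assoc, h, ← mul_assoc]

end Helpers4
section KeyLemma
variable {F : Type} [Field F] {E : Type} [Field E] [Algebra F E] {n : ℕ}
  {S : Set (Fin n × Fin n)}
  {dag : Matrix (Fin n) (Fin n) E → Matrix (Fin n) (Fin n) E}

lemma key_iff [Fintype F] (hodd : ringChar F ≠ 2)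
    (hS1 : ∀ p ∈ S, (p:(Fin n × Fin n)).1 < p.2)
    (hS2 : ∀ i j k : Fin n, (i, j) ∈ S → (j, k) ∈ S → (i, k) ∈ S)
    (hdag : IsPatternAntiInvolution F E S dag)
    {f : Matrix (Fin n) (Fin n) E → Matrix (Fin n) (Fin n) E}
    (hf : IsSpringerMorphism F E S dag f) :
    ∀ u ∈ patUGrp E S dag, ∀ v ∈ patUGrp E S dag,
      (f v ∈ patGrpDot E S dag (f u) ↔
        ∃ a ∈ patGrp E S, ∃ b ∈ patGrp E S, v - 1 = a * (u - 1) * b) := by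
  intro u hu v hv
  obtain ⟨xu, hxu, hueq⟩ := hu.1
  obtain ⟨xv, hxv, hveq⟩ := hv.1
  have hu1 : u - 1 = xu := by rw [hueq]; exact add_sub_cancel_left 1 xu
  have hv1 : v - 1 = xv := by rw [hveq]; exact add_sub_cancel_left 1 xv
  obtain ⟨cu, hcu, hfu⟩ := springer_factor hS2 hf xu hxu
  obtain ⟨cv, hcv, hfv⟩ := springer_factor hS2 hf xv hxv
  have hfu' : f u = xu * cu := by rw [hueq]; exact hfu
  have hfv' : f v = xv * cv := by rw [hveq]; exact hfv
  have hUu : f u ∈ patUAlg E S dag := by rw [← hf.2.1]; exact ⟨u, hu, rfl⟩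
  have hUv : f v ∈ patUAlg E S dag := by rw [← hf.2.1]; exact ⟨v, hv, rfl⟩
  constructor
  · rintro ⟨g, hg, hdot⟩
    obtain ⟨cv', hcv', hcvcv', hcv'cv⟩ := pg_inv hS1 hS2 hcv
    refine ⟨g, hg, cu * (dagGrp E dag g * cv'),
      pg_mul hS2 hcu (pg_mul hS2 (dg_grp_mem hdag hg) hcv'), ?_⟩
    rw [hu1, hv1]
    have h1 : xv * cv = g * (xu * cu) * dagGrp E dag g := by rw [← hfv', ← hfu', hdot]
    calc xv = xv * (cv * cv') := by rw [hcvcv', mul_one]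
      _ = (xv * cv) * cv' := by rw [mul_assoc]
      _ = g * (xu * cu) * dagGrp E dag g * cv' := by rw [h1]
      _ = g * xu * (cu * (dagGrp E dag g * cv')) := by simp only [mul_assoc]
  · rintro ⟨a, ha, b, hb, hab⟩
    rw [hu1, hv1] at hab
    obtain ⟨cu', hcu', hcucu', hcu'cu⟩ := pg_inv hS1 hS2 hcu
    set b2 := cu' * (b * cv) with hb2def
    have hb2 : b2 ∈ patGrp E S := pg_mul hS2 hcu' (pg_mul hS2 hb hcv)
    have hy : f v = a * f u * b2 := by
      rw [hfv', hfu', hab, hb2def]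
      simp only [mul_assoc]
      rw [← mul_assoc cu cu', hcucu', one_mul]
    have hy2 : f v = dagGrp E dag b2 * (f u * dagGrp E dag a) := by
      have e1 : dag (f v) = dag ((a * f u) * b2) := congrArg dag hy
      rw [dg_mul_right hS2 hdag hb2 (pg_mul_pa hS2 ha hUu.1),
        dg_mul_left hS2 hdag ha hUu.1, hUv.2, hUu.2] at e1
      have e2 : -(f v) = -(dagGrp E dag b2 * (f u * dagGrp E dag a)) := by
        rw [e1]; simp only [neg_mul, mul_neg]
      exact neg_injective e2
    obtain ⟨a', ha', haa', ha'a⟩ := pg_inv hS1 hS2 ha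
    have hdge : dagGrp E dag a * dagGrp E dag a' = 1 := by
      rw [← dg_grp_mul hS2 hdag ha' ha, ha'a, dg_grp_one hdag]
    set m := a' * dagGrp E dag b2 with hmdef
    have hm : m ∈ patGrp E S := pg_mul hS2 ha' (dg_grp_mem hdag hb2)
    have hdagm : dagGrp E dag m = b2 * dagGrp E dag a' := by
      rw [hmdef, dg_grp_mul hS2 hdag ha' (dg_grp_mem hdag hb2), dg_grp_invol hdag hb2]
    have e : a * f u * b2 = dagGrp E dag b2 * (f u * dagGrp E dag a) := by
      rw [← hy, hy2]
    have e2 : dagGrp E dag b2 * f u = a * (f u * (b2 * dagGrp E dag a')) := by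
      calc dagGrp E dag b2 * f u
          = dagGrp E dag b2 * (f u * (dagGrp E dag a * dagGrp E dag a')) := by
            rw [hdge, mul_one]
        _ = (dagGrp E dag b2 * (f u * dagGrp E dag a)) * dagGrp E dag a' := by
            simp only [mul_assoc]
        _ = (a * f u * b2) * dagGrp E dag a' := by rw [← e]
        _ = a * (f u * (b2 * dagGrp E dag a')) := by simp only [mul_assoc]
    have hmx : m * f u = f u * dagGrp E dag m := by
      rw [hmdef, hdagm]
      calc a' * dagGrp E dag b2 * f u
          = a' * (dagGrp E dag b2 * f u) := by rw [mul_assoc]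
        _ = a' * (a * (f u * (b2 * dagGrp E dag a'))) := by rw [e2]
        _ = (a' * a) * (f u * (b2 * dagGrp E dag a')) := by simp only [mul_assoc]
        _ = f u * (b2 * dagGrp E dag a') := by rw [ha'a, one_mul]
    obtain ⟨r, hr⟩ := pg_sqrt hodd hS1 hm
    have hs : m ^ r ∈ patGrp E S := pg_pow hS2 hm r
    have hsx : m ^ r * f u = f u * dagGrp E dag (m ^ r) := by
      rw [dg_grp_pow hS2 hdag hm r]; exact conj_iter hmx r
    have hdagsq : dagGrp E dag (m ^ r) * dagGrp E dag (m ^ r) = dagGrp E dag m := by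
      rw [← dg_grp_mul hS2 hdag hs hs, ← sq, hr]
    refine ⟨a * m ^ r, pg_mul hS2 ha hs, ?_⟩
    rw [dg_grp_mul hS2 hdag ha hs]
    have hstep : m ^ r * (f u * (dagGrp E dag (m ^ r) * dagGrp E dag a))
        = m * (f u * dagGrp E dag a) := by
      calc m ^ r * (f u * (dagGrp E dag (m ^ r) * dagGrp E dag a))
          = (m ^ r * f u) * (dagGrp E dag (m ^ r) * dagGrp E dag a) := by
            simp only [mul_assoc]
        _ = (f u * dagGrp E dag (m ^ r)) * (dagGrp E dag (m ^ r) * dagGrp E dag a) := by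
            rw [hsx]
        _ = f u * ((dagGrp E dag (m ^ r) * dagGrp E dag (m ^ r)) * dagGrp E dag a) := by
            simp only [mul_assoc]
        _ = f u * (dagGrp E dag m * dagGrp E dag a) := by rw [hdagsq]
        _ = (f u * dagGrp E dag m) * dagGrp E dag a := by simp only [mul_assoc]
        _ = (m * f u) * dagGrp E dag a := by rw [← hmx]
        _ = m * (f u * dagGrp E dag a) := by rw [mul_assoc]
    calc f v = dagGrp E dag b2 * (f u * dagGrp E dag a) := hy2
      _ = (a * a') * (dagGrp E dag b2 * (f u * dagGrp E dag a)) := by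
          rw [haa', one_mul]
      _ = a * (m * (f u * dagGrp E dag a)) := by rw [hmdef]; simp only [mul_assoc]
      _ = a * (m ^ r * (f u * (dagGrp E dag (m ^ r) * dagGrp E dag a))) := by rw [hstep]
      _ = a * m ^ r * f u * (dagGrp E dag (m ^ r) * dagGrp E dag a) := by
          simp only [mul_assoc]

end KeyLemma
/-- With `G = 1 + 𝔤` a pattern subgroup, `†` an anti-involution as above,
`U = {u ∈ G | u† = u⁻¹}` and `f` a Springer morphism: for all `u, v ∈ U`,
`f(v) ∈ G·f(u)` if and only if `v - 1 ∈ G (u-1) G`.  Consequently the superclasses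
`K_u = {v ∈ U | f(v) ∈ G·f(u)}` of `U` are exactly the nonempty sets of the form
`U ∩ K_g`, where `K_g = {h ∈ G | h - 1 ∈ G (g-1) G}` is a superclass of `G` in the algebra
group supercharacter theory. -/
theorem pattern_superclasses_eq_intersections
    (F : Type) [Field F] [Fintype F] (E : Type) [Field E] [Fintype E] [Algebra F E]
    (hodd : ringChar F ≠ 2)
    {n : ℕ} (S : Set (Fin n × Fin n))
    (hS1 : ∀ p ∈ S, p.1 < p.2)
    (hS2 : ∀ i j k : Fin n, (i, j) ∈ S → (j, k) ∈ S → (i, k) ∈ S)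
    (dag : Matrix (Fin n) (Fin n) E → Matrix (Fin n) (Fin n) E)
    (hdag : IsPatternAntiInvolution F E S dag)
    (f : Matrix (Fin n) (Fin n) E → Matrix (Fin n) (Fin n) E)
    (hf : IsSpringerMorphism F E S dag f) :
    -- the key equivalence
    (∀ u ∈ patUGrp E S dag, ∀ v ∈ patUGrp E S dag,
      (f v ∈ patGrpDot E S dag (f u) ↔
        ∃ a ∈ patGrp E S, ∃ b ∈ patGrp E S, v - 1 = a * (u - 1) * b)) ∧
    -- every superclass of U is of the form U ∩ K_g
    (∀ u ∈ patUGrp E S dag, ∃ g ∈ patGrp E S,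
      patSupclass E S dag f u =
        patUGrp E S dag ∩
          {h | h ∈ patGrp E S ∧ ∃ a ∈ patGrp E S, ∃ b ∈ patGrp E S,
            h - 1 = a * (g - 1) * b}) ∧
    -- every nonempty set of the form U ∩ K_g is a superclass of U
    (∀ g ∈ patGrp E S,
      (patUGrp E S dag ∩
        {h | h ∈ patGrp E S ∧ ∃ a ∈ patGrp E S, ∃ b ∈ patGrp E S,
          h - 1 = a * (g - 1) * b}).Nonempty →
      ∃ u ∈ patUGrp E S dag,
        patUGrp E S dag ∩
          {h | h ∈ patGrp E S ∧ ∃ a ∈ patGrp E S, ∃ b ∈ patGrp E S,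
            h - 1 = a * (g - 1) * b} =
          patSupclass E S dag f u) := by

  have key := key_iff hodd hS1 hS2 hdag hf
  refine ⟨key, ?_, ?_⟩
  · intro u hu
    refine ⟨u, hu.1, ?_⟩
    ext v
    constructor
    · rintro ⟨hvU, hdot⟩
      exact ⟨hvU, hvU.1, (key u hu v hvU).mp hdot⟩
    · rintro ⟨hvU, -, hab⟩
      exact ⟨hvU, (key u hu v hvU).mpr hab⟩
  · rintro g hg ⟨u, huU, -, a, ha, b, hb, hugb⟩
    obtain ⟨a', ha', haa', ha'a⟩ := pg_inv hS1 hS2 ha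
    obtain ⟨b', hb', hbb', hb'b⟩ := pg_inv hS1 hS2 hb
    have hginv : g - 1 = a' * (u - 1) * b' := by
      rw [hugb]
      refine Eq.symm ?_
      calc a' * (a * (g - 1) * b) * b'
          = (a' * a) * ((g - 1) * (b * b')) := by simp only [mul_assoc]
        _ = (g - 1) * (b * b') := by rw [ha'a, one_mul]
        _ = g - 1 := by rw [hbb', mul_one]
    refine ⟨u, huU, ?_⟩
    ext h
    constructor
    · rintro ⟨hhU, -, c, hc, d, hd, hhgd⟩
      refine ⟨hhU, (key u huU h hhU).mpr ⟨c * a', pg_mul hS2 hc ha',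
        b' * d, pg_mul hS2 hb' hd, ?_⟩⟩
      rw [hhgd, hginv]
      simp only [mul_assoc]
    · rintro ⟨hhU, hdot⟩
      obtain ⟨c, hc, d, hd, hhud⟩ := (key u huU h hhU).mp hdot
      refine ⟨hhU, hhU.1, c * a, pg_mul hS2 hc ha, b * d, pg_mul hS2 hb hd, ?_⟩
      rw [hhud, hugb]
      simp only [mul_assoc]
end
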